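/- Let A = [A_{ij}]_{i,j=1}^n be an n×n block positive definite complex matrix with p×p blocks and let B = [B_{ij}]_{i,j=1}^n be an n×n block positive definite complex matrix with q×q blocks. Then det(A*B) ≥ (det A)^q · (det B)^p · ∏_{μ=2}^n ( (det A_{μμ} · det A_{μ-1} / det A_μ)^q + (det B_{μμ} · det B_{μ-1} / det B_μ)^p − 1 ), where A*B is the Khatri-Rao product and A_μ, B_μ denote the μ-th leading principal block submatrices. -/

import Mathlib

open scoped ComplexOrder

/-- The `m`-th leading principal block submatrix `A_m = [A_{ij}]_{i,j=1}^m` of an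
`n×n` block matrix `A` with `p×p` blocks. -/
def leadBlock {n p : ℕ} (A : Matrix (Fin n × Fin p) (Fin n × Fin p) ℂ)
    (m : ℕ) (h : m ≤ n) : Matrix (Fin m × Fin p) (Fin m × Fin p) ℂ :=
  A.submatrix (Prod.map (Fin.castLE h) id) (Prod.map (Fin.castLE h) id)

/-- The `k`-th diagonal block `A_{kk}` of an `n×n` block matrix `A` with `p×p` blocks. -/
def diagBlock {n p : ℕ} (A : Matrix (Fin n × Fin p) (Fin n × Fin p) ℂ)
    (k : Fin n) : Matrix (Fin p) (Fin p) ℂ :=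
  fun a b => A (k, a) (k, b)

/-- The Khatri-Rao product `A * B = [A_{ij} ⊗ B_{ij}]_{i,j=1}^n` of an `n×n` block
matrix `A` with `p×p` blocks and an `n×n` block matrix `B` with `q×q` blocks. -/
def khatriRao {n p q : ℕ} (A : Matrix (Fin n × Fin p) (Fin n × Fin p) ℂ)
    (B : Matrix (Fin n × Fin q) (Fin n × Fin q) ℂ) :
    Matrix (Fin n × (Fin p × Fin q)) (Fin n × (Fin p × Fin q)) ℂ :=
  fun x y => A (x.1, x.2.1) (y.1, y.2.1) * B (x.1, x.2.2) (y.1, y.2.2)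


section OppenheimHelpers
open scoped Kronecker
open Matrix
open scoped MatrixOrder

section helper1
variable {m n l : Type*} [Fintype m] [Fintype n] [DecidableEq m] [DecidableEq n]



lemma kron_conjTranspose (A : Matrix m m ℂ) (B : Matrix n n ℂ) :
    (A ⊗ₖ B)ᴴ = Aᴴ ⊗ₖ Bᴴ := by
  ext ⟨i, j⟩ ⟨k, l⟩
  simp [Matrix.conjTranspose_apply, Matrix.kroneckerMap_apply, mul_comm]

lemma PosSemidef.kron {A : Matrix m m ℂ} {B : Matrix n n ℂ}
    (hA : A.PosSemidef) (hB : B.PosSemidef) : (A ⊗ₖ B).PosSemidef := by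
  obtain ⟨C, rfl⟩ : ∃ C : Matrix m m ℂ, A = Cᴴ * C := CStarAlgebra.nonneg_iff_eq_star_mul_self.mp hA.nonneg
  obtain ⟨D, rfl⟩ : ∃ D : Matrix n n ℂ, B = Dᴴ * D := CStarAlgebra.nonneg_iff_eq_star_mul_self.mp hB.nonneg
  rw [show kroneckerMap (fun x1 x2 => x1 * x2) (Cᴴ * C) (Dᴴ * D) = (Cᴴ ⊗ₖ Dᴴ) * (C ⊗ₖ D) from Matrix.mul_kronecker_mul _ _ _ _, ← kron_conjTranspose]
  exact Matrix.posSemidef_conjTranspose_mul_self _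

lemma posDef_of_posSemidef_det_ne_zero {A : Matrix m m ℂ} (hA : A.PosSemidef)
    (h : A.det ≠ 0) : A.PosDef := by
  refine .of_dotProduct_mulVec_pos hA.1 (fun x hx => ?_)
  have h1 : star x ⬝ᵥ A *ᵥ x ≠ 0 := by
    intro hq
    have h0 := (hA.dotProduct_mulVec_zero_iff x).mp hq
    
    exact hx (Matrix.mulVec_injective_iff_isUnit.mpr (Matrix.isUnit_iff_isUnit_det _ |>.2 h.isUnit)
      (by simpa using h0))
  exact lt_of_le_of_ne (hA.dotProduct_mulVec_nonneg x) (Ne.symm h1)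

lemma PosDef.kron {A : Matrix m m ℂ} {B : Matrix n n ℂ}
    (hA : A.PosDef) (hB : B.PosDef) : (A ⊗ₖ B).PosDef := by
  refine posDef_of_posSemidef_det_ne_zero (PosSemidef.kron hA.posSemidef hB.posSemidef) ?_
  rw [Matrix.det_kronecker]
  exact mul_ne_zero (pow_ne_zero _ hA.det_pos.ne') (pow_ne_zero _ hB.det_pos.ne')

lemma PosDef.submatrix_inj {M : Matrix n n ℂ} (hM : M.PosDef) {e : m → n}
    (he : Function.Injective e) : (M.submatrix e e).PosDef := by
  have key : M.submatrix e e = ((1 : Matrix n n ℂ).submatrix id e)ᴴ * M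
      * ((1 : Matrix n n ℂ).submatrix id e) := by
    rw [(by simp : M = 1 * M * 1), submatrix_mul (he₂ := Function.bijective_id),
      submatrix_mul (he₂ := Function.bijective_id), submatrix_id_id]
    simp only [conjTranspose_submatrix, conjTranspose_one]
    rw [(by simp : (1 : Matrix n n ℂ) * M * 1 = M)]
  rw [key]
  refine .of_dotProduct_mulVec_pos (isHermitian_conjTranspose_mul_mul _ hM.1) (fun x hx => ?_)
  have hBx : (1 : Matrix n n ℂ).submatrix id e *ᵥ x ≠ 0 := by
    intro h0
    apply hx
    funext i
    have := congrFun h0 (e i)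
    simpa [Matrix.mulVec, Matrix.submatrix, dotProduct, Matrix.one_apply, he.eq_iff] using this
  have := hM.dotProduct_mulVec_pos hBx
  simpa only [star_mulVec, dotProduct_mulVec, vecMul_vecMul] using this

end helper1

section scalar

lemma one_le_prod_real {ι : Type*} {s : Finset ι} {f : ι → ℝ}
    (h : ∀ i ∈ s, 1 ≤ f i) : 1 ≤ ∏ i ∈ s, f i := by
  classical
  induction s using Finset.cons_induction with
  | empty => simp
  | cons a s ha ih =>
    rw [Finset.prod_cons]
    have h1 := h a (Finset.mem_cons_self _ _)
    have h2 := ih fun i hi => h i (Finset.mem_cons_of_mem hi)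
    nlinarith

lemma lemC {ι : Type*} (s : Finset ι) (u v : ι → ℝ)
    (hu : ∀ i ∈ s, 1 ≤ u i) (hv : ∀ i ∈ s, 1 ≤ v i) :
    (∏ i ∈ s, u i) + (∏ i ∈ s, v i) - 1 ≤ ∏ i ∈ s, (u i + v i - 1) := by
  classical
  induction s using Finset.cons_induction with
  | empty => simp
  | cons a s ha ih =>
    have hu' : ∀ i ∈ s, 1 ≤ u i := fun i hi => hu i (Finset.mem_cons_of_mem hi)
    have hv' : ∀ i ∈ s, 1 ≤ v i := fun i hi => hv i (Finset.mem_cons_of_mem hi)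
    have hua : 1 ≤ u a := hu a (Finset.mem_cons_self _ _)
    have hva : 1 ≤ v a := hv a (Finset.mem_cons_self _ _)
    have hP : 1 ≤ ∏ i ∈ s, u i := one_le_prod_real hu'
    have hQ : 1 ≤ ∏ i ∈ s, v i := one_le_prod_real hv'
    have ih' := ih hu' hv'
    rw [Finset.prod_cons, Finset.prod_cons, Finset.prod_cons]
    have h1 : (u a + v a - 1) * ((∏ i ∈ s, u i) + (∏ i ∈ s, v i) - 1)
        ≤ (u a + v a - 1) * ∏ i ∈ s, (u i + v i - 1) := by
      apply mul_le_mul_of_nonneg_left ih' (by linarith)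
    nlinarith [mul_nonneg (sub_nonneg.2 hua) (sub_nonneg.2 hQ),
      mul_nonneg (sub_nonneg.2 hva) (sub_nonneg.2 hP)]

end scalar

section psd

variable {m l : Type*} [Fintype m] [DecidableEq m] [Fintype l] [DecidableEq l]

lemma det_conj_unitary {u D : Matrix m m ℂ} (hu : u * uᴴ = 1) :
    (u * D * uᴴ).det = D.det := by
  rw [det_mul, det_mul]
  calc u.det * D.det * uᴴ.det = D.det * (u.det * uᴴ.det) := by ring
    _ = D.det * (u * uᴴ).det := by rw [det_mul]
    _ = D.det := by rw [hu, det_one, mul_one]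

lemma unitary_mul_conjTranspose {M : Matrix m m ℂ} (hM : M.IsHermitian) :
    (hM.eigenvectorUnitary : Matrix m m ℂ) * (hM.eigenvectorUnitary : Matrix m m ℂ)ᴴ = 1 := by
  simpa [star_eq_conjTranspose] using (Matrix.mem_unitaryGroup_iff).mp hM.eigenvectorUnitary.2

/-- Spectral decomposition in the shifted form: `1 + M = u * diagonal (1 + eig) * uᴴ`. -/
lemma one_add_spectral {M : Matrix m m ℂ} (hM : M.IsHermitian) :
    1 + M = (hM.eigenvectorUnitary : Matrix m m ℂ) *
        diagonal (fun i => 1 + (hM.eigenvalues i : ℂ)) *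
        (hM.eigenvectorUnitary : Matrix m m ℂ)ᴴ := by
  set u := (hM.eigenvectorUnitary : Matrix m m ℂ)
  have hu : u * uᴴ = 1 := unitary_mul_conjTranspose hM
  have hspec := hM.spectral_theorem
  rw [Unitary.conjStarAlgAut_apply, star_eq_conjTranspose] at hspec
  calc 1 + M = u * uᴴ + u * diagonal (RCLike.ofReal ∘ hM.eigenvalues) * uᴴ := by
        rw [← hspec, hu]
    _ = u * (1 * uᴴ) + u * (diagonal (RCLike.ofReal ∘ hM.eigenvalues) * uᴴ) := by
        rw [one_mul, Matrix.mul_assoc]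
    _ = u * ((1 + diagonal (RCLike.ofReal ∘ hM.eigenvalues)) * uᴴ) := by
        rw [← Matrix.mul_add, Matrix.add_mul]
    _ = u * (1 + diagonal (RCLike.ofReal ∘ hM.eigenvalues)) * uᴴ := by
        rw [Matrix.mul_assoc]
    _ = u * diagonal (fun i => 1 + (hM.eigenvalues i : ℂ)) * uᴴ := by
        rw [← Matrix.diagonal_one, Matrix.diagonal_add]
        rfl

lemma det_one_add_psd {M : Matrix m m ℂ} (hM : M.PosSemidef) : (1:ℂ) ≤ (1 + M).det := by
  rw [one_add_spectral hM.1, det_conj_unitary (unitary_mul_conjTranspose hM.1),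
    det_diagonal]
  have : ∀ i : m, ((1:ℝ) + hM.1.eigenvalues i : ℂ) = ((1 + hM.1.eigenvalues i : ℝ) : ℂ) := by
    intro i; push_cast; ring
  calc (1:ℂ) = ((1:ℝ):ℂ) := by norm_num
    _ ≤ _ := by
        rw [show (∏ i, (1 + (hM.1.eigenvalues i : ℂ))) = ((∏ i, (1 + hM.1.eigenvalues i) : ℝ) : ℂ)
          by push_cast; rfl]
        rw [Complex.real_le_real]
        exact one_le_prod_real fun i _ => by linarith [hM.eigenvalues_nonneg i]

lemma det_add_psd {Q P : Matrix m m ℂ} (hQ : Q.PosDef) (hP : P.PosSemidef) :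
    Q.det ≤ (Q + P).det := by
  classical
  set s := CFC.sqrt Q with hs
  have hss : s * s = Q := CFC.sqrt_mul_sqrt_self Q hQ.posSemidef.nonneg
  have hsherm : s.IsHermitian := (CFC.sqrt_nonneg Q).posSemidef.1
  have hdets : s.det ≠ 0 := by
    intro h0
    have : Q.det = 0 := by rw [← hss, det_mul, h0, mul_zero]
    exact hQ.det_pos.ne' this
  have hinv : s * s⁻¹ = 1 := mul_nonsing_inv _ (by simpa using hdets)
  have hinv' : s⁻¹ * s = 1 := nonsing_inv_mul _ (by simpa using hdets)
  have hsinvherm : s⁻¹.IsHermitian := hsherm.inv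
  set M := s⁻¹ * P * s⁻¹ with hM
  have hMpsd : M.PosSemidef := by
    have := hP.conjTranspose_mul_mul_same (B := s⁻¹)
    rwa [hsinvherm.eq] at this
  have key : Q + P = s * (1 + M) * s := by
    rw [Matrix.mul_add, Matrix.add_mul, Matrix.mul_one, hss, hM]
    congr 1
    calc P = 1 * P * 1 := by rw [Matrix.one_mul, Matrix.mul_one]
      _ = (s * s⁻¹) * P * (s⁻¹ * s) := by rw [hinv, hinv']
      _ = s * (s⁻¹ * P * s⁻¹ * s) := by simp only [Matrix.mul_assoc]
      _ = s * (s⁻¹ * P * s⁻¹) * s := (Matrix.mul_assoc _ _ _).symm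
  rw [key]
  have hd : (s * (1 + M) * s).det = (1 + M).det * Q.det := by
    rw [det_mul, det_mul, ← hss, det_mul]; ring
  rw [hd]
  calc Q.det = 1 * Q.det := (one_mul _).symm
    _ ≤ (1 + M).det * Q.det :=
        mul_le_mul_of_nonneg_right (det_one_add_psd hMpsd) hQ.det_pos.le

end psd

section lemAB

lemma conj_kron {p q : ℕ} (u a : Matrix (Fin p) (Fin p) ℂ) (v b : Matrix (Fin q) (Fin q) ℂ) :
    (u * a * uᴴ) ⊗ₖ (v * b * vᴴ) = (u ⊗ₖ v) * (a ⊗ₖ b) * (u ⊗ₖ v)ᴴ := by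
  rw [Matrix.mul_kronecker_mul, Matrix.mul_kronecker_mul, kron_conjTranspose]

lemma lemB {p q : ℕ} {X : Matrix (Fin p) (Fin p) ℂ} {Y : Matrix (Fin q) (Fin q) ℂ}
    (hX : (X - 1).PosSemidef) (hY : (Y - 1).PosSemidef) :
    X.det ^ q + Y.det ^ p - 1 ≤
      (X ⊗ₖ (1 : Matrix (Fin q) (Fin q) ℂ) + (1 : Matrix (Fin p) (Fin p) ℂ) ⊗ₖ Y - 1).det := by
  classical
  set u := (hX.1.eigenvectorUnitary : Matrix (Fin p) (Fin p) ℂ) with hu_def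
  set v := (hY.1.eigenvectorUnitary : Matrix (Fin q) (Fin q) ℂ) with hv_def
  set z := hX.1.eigenvalues with hz_def
  set w := hY.1.eigenvalues with hw_def
  have hu : u * uᴴ = 1 := unitary_mul_conjTranspose hX.1
  have hv : v * vᴴ = 1 := unitary_mul_conjTranspose hY.1
  have hXu : X = u * diagonal (fun i => 1 + (z i : ℂ)) * uᴴ := by
    have := one_add_spectral hX.1
    rwa [add_sub_cancel] at this
  have hYv : Y = v * diagonal (fun j => 1 + (w j : ℂ)) * vᴴ := by
    have := one_add_spectral hY.1
    rwa [add_sub_cancel] at this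
  have hone_p : (1 : Matrix (Fin p) (Fin p) ℂ) = u * 1 * uᴴ := by rw [Matrix.mul_one, hu]
  have hone_q : (1 : Matrix (Fin q) (Fin q) ℂ) = v * 1 * vᴴ := by rw [Matrix.mul_one, hv]
  set P := u ⊗ₖ v with hP_def
  have hP : P * Pᴴ = 1 := by
    rw [hP_def, kron_conjTranspose, ← Matrix.mul_kronecker_mul, hu, hv,
      Matrix.one_kronecker_one]
  have hK : X ⊗ₖ (1 : Matrix (Fin q) (Fin q) ℂ) + (1 : Matrix (Fin p) (Fin p) ℂ) ⊗ₖ Y - 1 =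
      P * (diagonal (fun ij : Fin p × Fin q => (1 + (z ij.1 : ℂ)) + (1 + (w ij.2 : ℂ)) - 1))
        * Pᴴ := by
    have h1 : X ⊗ₖ (1 : Matrix (Fin q) (Fin q) ℂ) =
        P * (diagonal (fun i => 1 + (z i : ℂ)) ⊗ₖ (1 : Matrix (Fin q) (Fin q) ℂ)) * Pᴴ := by
      conv_lhs => rw [hXu, hone_q]
      rw [conj_kron, ← hP_def]
    have h2 : (1 : Matrix (Fin p) (Fin p) ℂ) ⊗ₖ Y =
        P * ((1 : Matrix (Fin p) (Fin p) ℂ) ⊗ₖ diagonal (fun j => 1 + (w j : ℂ))) * Pᴴ := by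
      conv_lhs => rw [hYv, hone_p]
      rw [conj_kron, ← hP_def]
    have h3 : (1 : Matrix (Fin p × Fin q) (Fin p × Fin q) ℂ) = P * 1 * Pᴴ := by
      rw [Matrix.mul_one, hP]
    rw [h1, h2]
    conv_lhs => rw [h3]
    rw [← Matrix.add_mul, ← Matrix.mul_add, ← Matrix.sub_mul, ← Matrix.mul_sub]
    congr 2
    rw [← Matrix.diagonal_one (n := Fin q), ← Matrix.diagonal_one (n := Fin p),
      Matrix.diagonal_kronecker_diagonal, Matrix.diagonal_kronecker_diagonal,
      ← Matrix.diagonal_one (n := Fin p × Fin q), ← Matrix.diagonal_sub,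
      ← Matrix.diagonal_add]
    congr 1
    funext ij
    simp
  have hdetK : (X ⊗ₖ (1 : Matrix (Fin q) (Fin q) ℂ) + (1 : Matrix (Fin p) (Fin p) ℂ) ⊗ₖ Y
      - 1).det = ∏ ij : Fin p × Fin q, ((1 + (z ij.1 : ℂ)) + (1 + (w ij.2 : ℂ)) - 1) := by
    rw [hK, det_conj_unitary hP, det_diagonal]
  have hdetX : X.det = ∏ i, (1 + (z i : ℂ)) := by
    rw [hXu, det_conj_unitary hu, det_diagonal]
  have hdetY : Y.det = ∏ j, (1 + (w j : ℂ)) := by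
    rw [hYv, det_conj_unitary hv, det_diagonal]
  rw [hdetK, hdetX, hdetY]
  have cast1 : (∏ i, (1 + (z i : ℂ))) = (((∏ i, (1 + z i)) : ℝ) : ℂ) := by push_cast; rfl
  have cast2 : (∏ j, (1 + (w j : ℂ))) = (((∏ j, (1 + w j)) : ℝ) : ℂ) := by push_cast; rfl
  have cast3 : (∏ ij : Fin p × Fin q, ((1 + (z ij.1 : ℂ)) + (1 + (w ij.2 : ℂ)) - 1)) =
      (((∏ ij : Fin p × Fin q, ((1 + z ij.1) + (1 + w ij.2) - 1)) : ℝ) : ℂ) := by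
    push_cast; rfl
  rw [cast1, cast2, cast3]
  rw [show ((((∏ i, (1 + z i)) : ℝ) : ℂ)) ^ q = ((((∏ i, (1 + z i)) ^ q : ℝ)) : ℂ) by push_cast; rfl,
    show ((((∏ j, (1 + w j)) : ℝ) : ℂ)) ^ p = ((((∏ j, (1 + w j)) ^ p : ℝ)) : ℂ) by push_cast; rfl]
  rw [show ((((∏ i, (1 + z i)) ^ q : ℝ)) : ℂ) + ((((∏ j, (1 + w j)) ^ p : ℝ)) : ℂ) - 1 =
    ((((∏ i, (1 + z i)) ^ q + (∏ j, (1 + w j)) ^ p - 1 : ℝ)) : ℂ) by push_cast; ring]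
  rw [Complex.real_le_real]
  have key := lemC (Finset.univ : Finset (Fin p × Fin q))
    (fun ij => 1 + z ij.1) (fun ij => 1 + w ij.2)
    (fun ij _ => by have h := hX.eigenvalues_nonneg ij.1; rw [← hz_def] at h; show (1:ℝ) ≤ 1 + z ij.1; linarith)
    (fun ij _ => by have h := hY.eigenvalues_nonneg ij.2; rw [← hw_def] at h; show (1:ℝ) ≤ 1 + w ij.2; linarith)
  have e1 : (∏ ij : Fin p × Fin q, (1 + z ij.1)) = (∏ i, (1 + z i)) ^ q := by
    rw [Fintype.prod_prod_type]
    simp [Finset.prod_const, Finset.prod_pow]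
  have e2 : (∏ ij : Fin p × Fin q, (1 + w ij.2)) = (∏ j, (1 + w j)) ^ p := by
    rw [Fintype.prod_prod_type]
    simp [Finset.prod_const, ← Finset.prod_pow]
  rw [e1, e2] at key
  convert key using 2

lemma lemA {p q : ℕ} {α S : Matrix (Fin p) (Fin p) ℂ} {β R : Matrix (Fin q) (Fin q) ℂ}
    (hS : S.PosDef) (hR : R.PosDef) (hαS : (α - S).PosSemidef) (hβR : (β - R).PosSemidef) :
    α.det ^ q * R.det ^ p + S.det ^ q * β.det ^ p - S.det ^ q * R.det ^ p ≤
      (α ⊗ₖ R + S ⊗ₖ β - S ⊗ₖ R).det := by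
  classical
  set s := CFC.sqrt S with hs_def
  set r := CFC.sqrt R with hr_def
  have hss : s * s = S := CFC.sqrt_mul_sqrt_self S hS.posSemidef.nonneg
  have hrr : r * r = R := CFC.sqrt_mul_sqrt_self R hR.posSemidef.nonneg
  have hsh : s.IsHermitian := (CFC.sqrt_nonneg S).posSemidef.1
  have hrh : r.IsHermitian := (CFC.sqrt_nonneg R).posSemidef.1
  have hdets : s.det ≠ 0 := fun h0 => hS.det_pos.ne' (by rw [← hss, det_mul, h0, mul_zero])
  have hdetr : r.det ≠ 0 := fun h0 => hR.det_pos.ne' (by rw [← hrr, det_mul, h0, mul_zero])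
  have hsinv : s * s⁻¹ = 1 := mul_nonsing_inv _ (by simpa using hdets)
  have hsinv' : s⁻¹ * s = 1 := nonsing_inv_mul _ (by simpa using hdets)
  have hrinv : r * r⁻¹ = 1 := mul_nonsing_inv _ (by simpa using hdetr)
  have hrinv' : r⁻¹ * r = 1 := nonsing_inv_mul _ (by simpa using hdetr)
  have hsih : s⁻¹.IsHermitian := hsh.inv
  have hrih : r⁻¹.IsHermitian := hrh.inv
  set X := s⁻¹ * α * s⁻¹ with hX_def
  set Y := r⁻¹ * β * r⁻¹ with hY_def
  -- X - 1 is PSD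
  have hX1 : X - 1 = s⁻¹ * (α - S) * s⁻¹ := by
    rw [hX_def, Matrix.mul_sub, Matrix.sub_mul]
    congr 1
    calc (1 : Matrix (Fin p) (Fin p) ℂ) = s⁻¹ * s * (s * s⁻¹) := by rw [hsinv', hsinv, one_mul]
      _ = s⁻¹ * (s * s) * s⁻¹ := by simp only [Matrix.mul_assoc]
      _ = s⁻¹ * S * s⁻¹ := by rw [hss]
  have hY1 : Y - 1 = r⁻¹ * (β - R) * r⁻¹ := by
    rw [hY_def, Matrix.mul_sub, Matrix.sub_mul]
    congr 1
    calc (1 : Matrix (Fin q) (Fin q) ℂ) = r⁻¹ * r * (r * r⁻¹) := by rw [hrinv', hrinv, one_mul]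
      _ = r⁻¹ * (r * r) * r⁻¹ := by simp only [Matrix.mul_assoc]
      _ = r⁻¹ * R * r⁻¹ := by rw [hrr]
  have hXpsd : (X - 1).PosSemidef := by
    rw [hX1]
    have := hαS.conjTranspose_mul_mul_same (B := s⁻¹)
    rwa [hsih.eq] at this
  have hYpsd : (Y - 1).PosSemidef := by
    rw [hY1]
    have := hβR.conjTranspose_mul_mul_same (B := r⁻¹)
    rwa [hrih.eq] at this
  -- recover α, β
  have hα : α = s * X * s := by
    rw [hX_def]
    calc α = 1 * α * 1 := by rw [Matrix.one_mul, Matrix.mul_one]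
      _ = (s * s⁻¹) * α * (s⁻¹ * s) := by rw [hsinv, hsinv']
      _ = s * (s⁻¹ * α * s⁻¹ * s) := by simp only [Matrix.mul_assoc]
      _ = s * (s⁻¹ * α * s⁻¹) * s := (Matrix.mul_assoc _ _ _).symm
  have hβ : β = r * Y * r := by
    rw [hY_def]
    calc β = 1 * β * 1 := by rw [Matrix.one_mul, Matrix.mul_one]
      _ = (r * r⁻¹) * β * (r⁻¹ * r) := by rw [hrinv, hrinv']
      _ = r * (r⁻¹ * β * r⁻¹ * r) := by simp only [Matrix.mul_assoc]
      _ = r * (r⁻¹ * β * r⁻¹) * r := (Matrix.mul_assoc _ _ _).symm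
  -- congruence identity
  set C := s ⊗ₖ r with hC_def
  have hCh : Cᴴ = C := by
    rw [hC_def, kron_conjTranspose, hsh.eq, hrh.eq]
  have key : α ⊗ₖ R + S ⊗ₖ β - S ⊗ₖ R =
      C * (X ⊗ₖ (1 : Matrix (Fin q) (Fin q) ℂ) + (1 : Matrix (Fin p) (Fin p) ℂ) ⊗ₖ Y - 1) * C := by
    have h1 : α ⊗ₖ R = C * (X ⊗ₖ (1 : Matrix (Fin q) (Fin q) ℂ)) * C := by
      conv_lhs => rw [hα, show R = r * 1 * r by rw [Matrix.mul_one, hrr]]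
      rw [show (s * X * s) ⊗ₖ (r * 1 * r) = (s ⊗ₖ r) * (X ⊗ₖ (1 : Matrix (Fin q) (Fin q) ℂ))
          * (s ⊗ₖ r) by rw [Matrix.mul_kronecker_mul, Matrix.mul_kronecker_mul], ← hC_def]
    have h2 : S ⊗ₖ β = C * ((1 : Matrix (Fin p) (Fin p) ℂ) ⊗ₖ Y) * C := by
      conv_lhs => rw [hβ, show S = s * 1 * s by rw [Matrix.mul_one, hss]]
      rw [show (s * 1 * s) ⊗ₖ (r * Y * r) = (s ⊗ₖ r) * ((1 : Matrix (Fin p) (Fin p) ℂ) ⊗ₖ Y)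
          * (s ⊗ₖ r) by rw [Matrix.mul_kronecker_mul, Matrix.mul_kronecker_mul], ← hC_def]
    have h3 : S ⊗ₖ R = C * 1 * C := by
      rw [Matrix.mul_one, hC_def, ← Matrix.mul_kronecker_mul, hss, hrr]
    rw [h1, h2, h3, ← Matrix.add_mul, ← Matrix.mul_add, ← Matrix.sub_mul, ← Matrix.mul_sub]
  -- determinants
  have hdetC2 : C.det * C.det = S.det ^ q * R.det ^ p := by
    rw [hC_def, Matrix.det_kronecker]
    simp only [Fintype.card_fin]
    rw [← hss, ← hrr, det_mul, det_mul]
    ring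
  have hdetX : X.det * S.det = α.det := by
    rw [hX_def, det_mul, det_mul, ← hss, det_mul]
    have : s⁻¹.det * s.det = 1 := by
      rw [← det_mul, hsinv']; exact det_one
    calc s⁻¹.det * α.det * s⁻¹.det * (s.det * s.det)
        = α.det * ((s⁻¹.det * s.det) * (s⁻¹.det * s.det)) := by ring
      _ = α.det := by rw [this, one_mul, mul_one]
  have hdetY : Y.det * R.det = β.det := by
    rw [hY_def, det_mul, det_mul, ← hrr, det_mul]
    have : r⁻¹.det * r.det = 1 := by
      rw [← det_mul, hrinv']; exact det_one
    calc r⁻¹.det * β.det * r⁻¹.det * (r.det * r.det)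
        = β.det * ((r⁻¹.det * r.det) * (r⁻¹.det * r.det)) := by ring
      _ = β.det := by rw [this, one_mul, mul_one]
  have hdetkey : (α ⊗ₖ R + S ⊗ₖ β - S ⊗ₖ R).det =
      (X ⊗ₖ (1 : Matrix (Fin q) (Fin q) ℂ) + (1 : Matrix (Fin p) (Fin p) ℂ) ⊗ₖ Y - 1).det
        * (S.det ^ q * R.det ^ p) := by
    rw [key, det_mul, det_mul, ← hdetC2]; ring
  rw [hdetkey]
  have hle := lemB hXpsd hYpsd
  have hpos : (0:ℂ) ≤ S.det ^ q * R.det ^ p :=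
    mul_nonneg (pow_nonneg hS.det_pos.le _) (pow_nonneg hR.det_pos.le _)
  have := mul_le_mul_of_nonneg_right hle hpos
  refine le_trans (le_of_eq ?_) this
  have hXq : X.det ^ q * (S.det ^ q) = α.det ^ q := by
    rw [← mul_pow, hdetX]
  have hYp : Y.det ^ p * (R.det ^ p) = β.det ^ p := by
    rw [← mul_pow, hdetY]
  calc α.det ^ q * R.det ^ p + S.det ^ q * β.det ^ p - S.det ^ q * R.det ^ p
      = (X.det ^ q * S.det ^ q) * R.det ^ p + S.det ^ q * (Y.det ^ p * R.det ^ p)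
        - S.det ^ q * R.det ^ p := by rw [hXq, hYp]
    _ = (X.det ^ q + Y.det ^ p - 1) * (S.det ^ q * R.det ^ p) := by ring

end lemAB

section structural

/-- Splitting off the last block. -/
def finSplit (n : ℕ) (κ : Type*) : (Fin (n+1) × κ) ≃ ((Fin n × κ) ⊕ κ) where
  toFun x := if h : (x.1 : ℕ) < n then Sum.inl (⟨x.1, h⟩, x.2) else Sum.inr x.2
  invFun y := Sum.elim (fun z => (⟨z.1.1, Nat.lt_succ_of_lt z.1.2⟩, z.2))
    (fun a => (Fin.last n, a)) y
  left_inv x := by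
    obtain ⟨i, a⟩ := x
    by_cases h : (i : ℕ) < n
    · simp [h]
    · simp only [h, dif_neg, not_false_iff, Sum.elim_inr]
      have hi := i.isLt
      have : i = Fin.last n := Fin.ext (by simp only [Fin.val_last]; omega)
      rw [this]
  right_inv y := by
    rcases y with ⟨⟨i, hi⟩, a⟩ | a
    · simp [Fin.val_lt_last, hi]
    · simp [Fin.last]

lemma toBlocks₂₁_eq_conj {l m : Type*} (M : Matrix (l ⊕ m) (l ⊕ m) ℂ) (h : M.IsHermitian) :
    toBlocks₂₁ M = (toBlocks₁₂ M)ᴴ := by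
  ext i j
  exact (congrFun (congrFun h (Sum.inr i)) (Sum.inl j)).symm

lemma khatriRao_posSemidef {n p q : ℕ} {A : Matrix (Fin n × Fin p) (Fin n × Fin p) ℂ}
    {B : Matrix (Fin n × Fin q) (Fin n × Fin q) ℂ}
    (hA : A.PosSemidef) (hB : B.PosSemidef) : (khatriRao A B).PosSemidef := by
  rw [show khatriRao A B = (A ⊗ₖ B).submatrix (fun x => ((x.1, x.2.1), (x.1, x.2.2)))
      (fun x => ((x.1, x.2.1), (x.1, x.2.2))) from rfl]
  exact (PosSemidef.kron hA hB).submatrix _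

lemma khatriRao_inj {n p q : ℕ} : Function.Injective
    (fun x : Fin n × (Fin p × Fin q) => ((x.1, x.2.1), (x.1, x.2.2))) := by
  rintro ⟨i, a, b⟩ ⟨j, c, d⟩ h
  simp only [Prod.ext_iff] at h ⊢
  tauto

lemma khatriRao_posDef {n p q : ℕ} {A : Matrix (Fin n × Fin p) (Fin n × Fin p) ℂ}
    {B : Matrix (Fin n × Fin q) (Fin n × Fin q) ℂ}
    (hA : A.PosDef) (hB : B.PosDef) : (khatriRao A B).PosDef := by
  rw [show khatriRao A B = (A ⊗ₖ B).submatrix (fun x => ((x.1, x.2.1), (x.1, x.2.2)))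
      (fun x => ((x.1, x.2.1), (x.1, x.2.2))) from rfl]
  exact PosDef.submatrix_inj (PosDef.kron hA hB) khatriRao_inj

lemma filter_prod_split {n : ℕ} (g : Fin (n+1) → ℂ) :
    ∏ μ ∈ Finset.univ.filter (fun μ : Fin (n+1) => 1 ≤ μ.val), g μ =
      (∏ ν ∈ Finset.univ.filter (fun ν : Fin n => 1 ≤ ν.val), g ν.castSucc) *
        (if 1 ≤ n then g (Fin.last n) else 1) := by
  rw [Finset.prod_filter, Finset.prod_filter, Fin.prod_univ_castSucc]
  simp only [Fin.coe_castSucc, Fin.val_last]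

lemma leadBlock_self {n p : ℕ} (A : Matrix (Fin n × Fin p) (Fin n × Fin p) ℂ) (h : n ≤ n) :
    leadBlock A n h = A := by
  ext ⟨i, a⟩ ⟨j, b⟩; rfl

end structural

lemma fromBlocks_sub' {l m : Type*} (A A' : Matrix l l ℂ) (B B' : Matrix l m ℂ)
    (C C' : Matrix m l ℂ) (D D' : Matrix m m ℂ) :
    fromBlocks A B C D - fromBlocks A' B' C' D' =
      fromBlocks (A - A') (B - B') (C - C') (D - D') := by
  ext (i | i) (j | j) <;> simp [fromBlocks]

lemma finSplit_ne_last {n : ℕ} {κ : Type*} (x : Fin n × κ) :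
    (((finSplit n κ).symm (Sum.inl x)).1 : Fin (n+1)) ≠ Fin.last n := by
  intro h
  have := congrArg Fin.val h
  simp only [Fin.val_last] at this
  exact absurd this (Nat.ne_of_lt x.1.2)

theorem aux : ∀ (n p q : ℕ) (A : Matrix (Fin n × Fin p) (Fin n × Fin p) ℂ)
    (B : Matrix (Fin n × Fin q) (Fin n × Fin q) ℂ), A.PosDef → B.PosDef →
    A.det ^ q * B.det ^ p *
        ∏ μ ∈ Finset.univ.filter (fun μ : Fin n => 1 ≤ μ.val),
          (((diagBlock A μ).det * (leadBlock A μ.val μ.isLt.le).det /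
                (leadBlock A (μ.val + 1) μ.isLt).det) ^ q +
             ((diagBlock B μ).det * (leadBlock B μ.val μ.isLt.le).det /
                (leadBlock B (μ.val + 1) μ.isLt).det) ^ p - 1) ≤ (khatriRao A B).det := by
  intro n
  induction n with
  | zero =>
    intro p q A B hA hB
    simp [Matrix.det_isEmpty]
  | succ n ih =>
    intro p q A B hA hB
    -- block decomposition of A
    set A' : Matrix (Fin n × Fin p) (Fin n × Fin p) ℂ := leadBlock A n n.le_succ with hA'def
    set MA' := A.submatrix (finSplit n (Fin p)).symm (finSplit n (Fin p)).symm with hMA'def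
    set a := toBlocks₁₂ MA' with ha_def
    set α := diagBlock A (Fin.last n) with hα_def
    have hA' : A'.PosDef :=
      PosDef.submatrix_inj hA ((Fin.castLE_injective _).prodMap Function.injective_id)
    haveI : Invertible A' := A'.invertibleOfIsUnitDet hA'.det_pos.ne'.isUnit
    have hMA'psd : MA'.PosSemidef := hA.posSemidef.submatrix _
    have hblocksA : MA' = fromBlocks A' a aᴴ α := by
      conv_lhs => rw [← fromBlocks_toBlocks MA']
      rw [toBlocks₂₁_eq_conj _ hMA'psd.1]
      rfl
    set SA := α - aᴴ * A'⁻¹ * a with hSA_def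
    have hdetA : A.det = A'.det * SA.det := by
      have e1 : (MA').det = A.det := det_submatrix_equiv_self _ _
      rw [hblocksA, det_fromBlocks₁₁, invOf_eq_nonsing_inv] at e1
      rw [← e1]
    have hSApsd : SA.PosSemidef :=
      (Matrix.PosDef.fromBlocks₁₁ a α hA').mp (hblocksA ▸ hMA'psd)
    have hSA : SA.PosDef := posDef_of_posSemidef_det_ne_zero hSApsd (by
      intro h0; rw [h0, mul_zero] at hdetA; exact hA.det_pos.ne' hdetA)
    have hαSA : (α - SA).PosSemidef := by
      rw [hSA_def, sub_sub_cancel]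
      exact (hA'.inv.posSemidef).conjTranspose_mul_mul_same a
    -- block decomposition of B
    set B' : Matrix (Fin n × Fin q) (Fin n × Fin q) ℂ := leadBlock B n n.le_succ with hB'def
    set MB' := B.submatrix (finSplit n (Fin q)).symm (finSplit n (Fin q)).symm with hMB'def
    set b := toBlocks₁₂ MB' with hb_def
    set β := diagBlock B (Fin.last n) with hβ_def
    have hB' : B'.PosDef :=
      PosDef.submatrix_inj hB ((Fin.castLE_injective _).prodMap Function.injective_id)
    haveI : Invertible B' := B'.invertibleOfIsUnitDet hB'.det_pos.ne'.isUnit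
    have hMB'psd : MB'.PosSemidef := hB.posSemidef.submatrix _
    have hblocksB : MB' = fromBlocks B' b bᴴ β := by
      conv_lhs => rw [← fromBlocks_toBlocks MB']
      rw [toBlocks₂₁_eq_conj _ hMB'psd.1]
      rfl
    set SB := β - bᴴ * B'⁻¹ * b with hSB_def
    have hdetB : B.det = B'.det * SB.det := by
      have e1 : (MB').det = B.det := det_submatrix_equiv_self _ _
      rw [hblocksB, det_fromBlocks₁₁, invOf_eq_nonsing_inv] at e1
      rw [← e1]
    have hSBpsd : SB.PosSemidef :=
      (Matrix.PosDef.fromBlocks₁₁ b β hB').mp (hblocksB ▸ hMB'psd)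
    have hSB : SB.PosDef := posDef_of_posSemidef_det_ne_zero hSBpsd (by
      intro h0; rw [h0, mul_zero] at hdetB; exact hB.det_pos.ne' hdetB)
    have hβSB : (β - SB).PosSemidef := by
      rw [hSB_def, sub_sub_cancel]
      exact (hB'.inv.posSemidef).conjTranspose_mul_mul_same b
    have hβPD : β.PosDef := by
      rw [show β = B.submatrix (fun x => (Fin.last n, x)) (fun x => (Fin.last n, x)) from rfl]
      exact PosDef.submatrix_inj hB (fun x y h => (Prod.ext_iff.mp h).2)
    -- khatriRao pieces
    set G := khatriRao A' B' with hG_def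
    have hG : G.PosDef := khatriRao_posDef hA' hB'
    haveI : Invertible G := G.invertibleOfIsUnitDet hG.det_pos.ne'.isUnit
    set T := α ⊗ₖ SB + SA ⊗ₖ β - SA ⊗ₖ SB with hT_def
    have hTalt : T = (α - SA) ⊗ₖ SB + SA ⊗ₖ (β - SB) + SA ⊗ₖ SB := by
      rw [hT_def]; ext ⟨x1, x2⟩ ⟨y1, y2⟩
      simp only [Matrix.add_apply, Matrix.sub_apply, Matrix.kroneckerMap_apply]
      ring
    have hT : T.PosDef := by
      rw [hTalt]
      exact Matrix.PosDef.posSemidef_add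
        ((PosSemidef.kron hαSA hSB.posSemidef).add (PosSemidef.kron hSA.posSemidef hβSB))
        (PosDef.kron hSA hSB)
    set PA : Matrix (Fin (n+1) × Fin p) (Fin (n+1) × Fin p) ℂ :=
      fun x y => if x.1 = Fin.last n ∧ y.1 = Fin.last n then SA x.2 y.2 else 0 with hPA_def
    set PB : Matrix (Fin (n+1) × Fin q) (Fin (n+1) × Fin q) ℂ :=
      fun x y => if x.1 = Fin.last n ∧ y.1 = Fin.last n then SB x.2 y.2 else 0 with hPB_def
    set Δ : Matrix (Fin (n+1) × (Fin p × Fin q)) (Fin (n+1) × (Fin p × Fin q)) ℂ :=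
      fun x y => if x.1 = Fin.last n ∧ y.1 = Fin.last n then T x.2 y.2 else 0 with hΔ_def
    have hαe : ∀ x y, α x y = A (Fin.last n, x) (Fin.last n, y) := fun _ _ => rfl
    have hβe : ∀ x y, β x y = B (Fin.last n, x) (Fin.last n, y) := fun _ _ => rfl
    have hsplitK : khatriRao A B = khatriRao (A - PA) (B - PB) + Δ := by
      ext ⟨i, ab⟩ ⟨j, cd⟩
      show A (i, ab.1) (j, cd.1) * B (i, ab.2) (j, cd.2) =
        (A (i, ab.1) (j, cd.1) - PA (i, ab.1) (j, cd.1)) *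
          (B (i, ab.2) (j, cd.2) - PB (i, ab.2) (j, cd.2)) + Δ (i, ab) (j, cd)
      simp only [hPA_def, hPB_def, hΔ_def]
      by_cases hij : i = Fin.last n ∧ j = Fin.last n
      · obtain ⟨hi, hj⟩ := hij
        subst hi; subst hj
        rw [if_pos ⟨rfl, rfl⟩, if_pos ⟨rfl, rfl⟩, if_pos ⟨rfl, rfl⟩, hT_def]
        simp only [Matrix.add_apply, Matrix.sub_apply, Matrix.kroneckerMap_apply, hαe, hβe]
        ring
      · rw [if_neg hij, if_neg hij, if_neg hij]; ring
    -- A - PA is PSD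
    have hPAsub : PA.submatrix (finSplit n (Fin p)).symm (finSplit n (Fin p)).symm
        = fromBlocks 0 0 0 SA := by
      ext (x | x) (y | y)
      · show PA _ _ = (0 : Matrix (Fin n × Fin p) (Fin n × Fin p) ℂ) x y
        simp only [hPA_def]
        simp only [Matrix.zero_apply]
        exact if_neg (fun h => finSplit_ne_last x h.1)
      · show PA _ _ = (0 : Matrix (Fin n × Fin p) (Fin p) ℂ) x y
        simp only [hPA_def]
        simp only [Matrix.zero_apply]
        exact if_neg (fun h => finSplit_ne_last x h.1)
      · show PA _ _ = (0 : Matrix (Fin p) (Fin n × Fin p) ℂ) x y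
        simp only [hPA_def]
        simp only [Matrix.zero_apply]
        exact if_neg (fun h => finSplit_ne_last y h.2)
      · show PA _ _ = SA x y
        simp only [hPA_def]
        exact if_pos ⟨rfl, rfl⟩
    have hPBsub : PB.submatrix (finSplit n (Fin q)).symm (finSplit n (Fin q)).symm
        = fromBlocks 0 0 0 SB := by
      ext (x | x) (y | y)
      · show PB _ _ = (0 : Matrix (Fin n × Fin q) (Fin n × Fin q) ℂ) x y
        simp only [hPB_def]
        simp only [Matrix.zero_apply]
        exact if_neg (fun h => finSplit_ne_last x h.1)
      · show PB _ _ = (0 : Matrix (Fin n × Fin q) (Fin q) ℂ) x y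
        simp only [hPB_def]
        simp only [Matrix.zero_apply]
        exact if_neg (fun h => finSplit_ne_last x h.1)
      · show PB _ _ = (0 : Matrix (Fin q) (Fin n × Fin q) ℂ) x y
        simp only [hPB_def]
        simp only [Matrix.zero_apply]
        exact if_neg (fun h => finSplit_ne_last y h.2)
      · show PB _ _ = SB x y
        simp only [hPB_def]
        exact if_pos ⟨rfl, rfl⟩
    have hMApsd : (A - PA).PosSemidef := by
      rw [← posSemidef_submatrix_equiv (finSplit n (Fin p)).symm]
      have h1 : (A - PA).submatrix (finSplit n (Fin p)).symm (finSplit n (Fin p)).symm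
          = MA' - PA.submatrix (finSplit n (Fin p)).symm (finSplit n (Fin p)).symm := rfl
      rw [h1, hPAsub, hblocksA, fromBlocks_sub']
      simp only [sub_zero]
      rw [hSA_def, sub_sub_cancel]
      exact (Matrix.PosDef.fromBlocks₁₁ a _ hA').mpr (by rw [sub_self]; exact .zero)
    have hMBpsd : (B - PB).PosSemidef := by
      rw [← posSemidef_submatrix_equiv (finSplit n (Fin q)).symm]
      have h1 : (B - PB).submatrix (finSplit n (Fin q)).symm (finSplit n (Fin q)).symm
          = MB' - PB.submatrix (finSplit n (Fin q)).symm (finSplit n (Fin q)).symm := rfl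
      rw [h1, hPBsub, hblocksB, fromBlocks_sub']
      simp only [sub_zero]
      rw [hSB_def, sub_sub_cancel]
      exact (Matrix.PosDef.fromBlocks₁₁ b _ hB').mpr (by rw [sub_self]; exact .zero)
    have hWpsd : (khatriRao (A - PA) (B - PB)).PosSemidef := khatriRao_posSemidef hMApsd hMBpsd
    -- reindex khatriRao
    set W' := (khatriRao (A - PA) (B - PB)).submatrix (finSplit n (Fin p × Fin q)).symm
      (finSplit n (Fin p × Fin q)).symm with hW'def
    have hW'psd : W'.PosSemidef := hWpsd.submatrix _
    set c := toBlocks₁₂ W' with hc_def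
    set W22 := toBlocks₂₂ W' with hW22_def
    have hW'11 : toBlocks₁₁ W' = G := by
      ext x y
      show (A - PA) _ _ * (B - PB) _ _ = G x y
      simp only [Matrix.sub_apply]
      simp only [hPA_def, hPB_def]
      rw [if_neg (fun h => finSplit_ne_last x h.1), if_neg (fun h => finSplit_ne_last x h.1),
        sub_zero, sub_zero]
      rfl
    have hW'blocks : W' = fromBlocks G c cᴴ W22 := by
      conv_lhs => rw [← fromBlocks_toBlocks W']
      rw [hW'11, toBlocks₂₁_eq_conj _ hW'psd.1]
    have hΔsub : Δ.submatrix (finSplit n (Fin p × Fin q)).symm (finSplit n (Fin p × Fin q)).symm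
        = fromBlocks 0 0 0 T := by
      ext (x | x) (y | y)
      · show Δ _ _ = (0 : Matrix (Fin n × (Fin p × Fin q)) (Fin n × (Fin p × Fin q)) ℂ) x y
        simp only [hΔ_def]
        simp only [Matrix.zero_apply]
        exact if_neg (fun h => finSplit_ne_last x h.1)
      · show Δ _ _ = (0 : Matrix (Fin n × (Fin p × Fin q)) (Fin p × Fin q) ℂ) x y
        simp only [hΔ_def]
        simp only [Matrix.zero_apply]
        exact if_neg (fun h => finSplit_ne_last x h.1)
      · show Δ _ _ = (0 : Matrix (Fin p × Fin q) (Fin n × (Fin p × Fin q)) ℂ) x y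
        simp only [hΔ_def]
        simp only [Matrix.zero_apply]
        exact if_neg (fun h => finSplit_ne_last y h.2)
      · show Δ _ _ = T x y
        simp only [hΔ_def]
        exact if_pos ⟨rfl, rfl⟩
    have hK'blocks : (khatriRao A B).submatrix (finSplit n (Fin p × Fin q)).symm
        (finSplit n (Fin p × Fin q)).symm = fromBlocks G c cᴴ (W22 + T) := by
      rw [hsplitK]
      have h1 : (khatriRao (A - PA) (B - PB) + Δ).submatrix (finSplit n (Fin p × Fin q)).symm
          (finSplit n (Fin p × Fin q)).symm
          = W' + Δ.submatrix (finSplit n (Fin p × Fin q)).symm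
              (finSplit n (Fin p × Fin q)).symm := rfl
      rw [h1, hW'blocks, hΔsub, Matrix.fromBlocks_add]
      simp only [add_zero]
    set SW := W22 - cᴴ * G⁻¹ * c with hSW_def
    have hSWpsd : SW.PosSemidef :=
      (Matrix.PosDef.fromBlocks₁₁ c W22 hG).mp (hW'blocks ▸ hW'psd)
    have hdetK : (khatriRao A B).det = G.det * (SW + T).det := by
      have e0 : (khatriRao A B).det = ((khatriRao A B).submatrix
          (finSplit n (Fin p × Fin q)).symm (finSplit n (Fin p × Fin q)).symm).det :=
        (det_submatrix_equiv_self _ _).symm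
      have h2 : W22 + T - cᴴ * G⁻¹ * c = SW + T := by rw [hSW_def]; abel
      rw [e0, hK'blocks, det_fromBlocks₁₁, invOf_eq_nonsing_inv, h2]
    have hTdet : T.det ≤ (SW + T).det := by
      have := det_add_psd hT hSWpsd
      rwa [add_comm] at this
    have hlemA := lemA hSA hSB hαSA hβSB
    rw [← hT_def] at hlemA
    -- positivity of t₀
    have hd_αSA : SA.det ≤ α.det := by
      have := det_add_psd hSA hαSA; rwa [add_sub_cancel] at this
    have ht₀nonneg : (0:ℂ) ≤ α.det ^ q * SB.det ^ p + SA.det ^ q * β.det ^ p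
        - SA.det ^ q * SB.det ^ p := by
      have h1 : SA.det ^ q ≤ α.det ^ q := pow_le_pow_left₀ hSA.det_pos.le hd_αSA q
      have expr : α.det ^ q * SB.det ^ p + SA.det ^ q * β.det ^ p - SA.det ^ q * SB.det ^ p
          = (α.det ^ q - SA.det ^ q) * SB.det ^ p + SA.det ^ q * β.det ^ p := by ring
      rw [expr]
      exact add_nonneg (mul_nonneg (sub_nonneg.2 h1) (pow_nonneg hSB.det_pos.le _))
        (mul_nonneg (pow_nonneg hSA.det_pos.le _) (pow_nonneg hβPD.det_pos.le _))
    have hIH := ih p q A' B' hA' hB'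
    rw [← hG_def] at hIH
    have hmain : (A'.det ^ q * B'.det ^ p *
        ∏ ν ∈ Finset.univ.filter (fun ν : Fin n => 1 ≤ ν.val),
          (((diagBlock A' ν).det * (leadBlock A' ν.val ν.isLt.le).det /
                (leadBlock A' (ν.val + 1) ν.isLt).det) ^ q +
             ((diagBlock B' ν).det * (leadBlock B' ν.val ν.isLt.le).det /
                (leadBlock B' (ν.val + 1) ν.isLt).det) ^ p - 1)) *
        (α.det ^ q * SB.det ^ p + SA.det ^ q * β.det ^ p - SA.det ^ q * SB.det ^ p)
        ≤ G.det * (SW + T).det :=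
      mul_le_mul hIH (le_trans hlemA hTdet) ht₀nonneg hG.det_pos.le
    rw [hdetK]
    refine le_trans (le_of_eq ?_) hmain
    -- final algebraic identity
    rw [filter_prod_split]
    have hprodeq : (∏ ν ∈ Finset.univ.filter (fun ν : Fin n => 1 ≤ ν.val),
        (((diagBlock A ν.castSucc).det *
              (leadBlock A (ν.castSucc).val (ν.castSucc).isLt.le).det /
              (leadBlock A ((ν.castSucc).val + 1) (ν.castSucc).isLt).det) ^ q +
           ((diagBlock B ν.castSucc).det *
              (leadBlock B (ν.castSucc).val (ν.castSucc).isLt.le).det /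
              (leadBlock B ((ν.castSucc).val + 1) (ν.castSucc).isLt).det) ^ p - 1)) =
        ∏ ν ∈ Finset.univ.filter (fun ν : Fin n => 1 ≤ ν.val),
          (((diagBlock A' ν).det * (leadBlock A' ν.val ν.isLt.le).det /
                (leadBlock A' (ν.val + 1) ν.isLt).det) ^ q +
             ((diagBlock B' ν).det * (leadBlock B' ν.val ν.isLt.le).det /
                (leadBlock B' (ν.val + 1) ν.isLt).det) ^ p - 1) :=
      Finset.prod_congr rfl (fun ν _ => rfl)
    rw [hprodeq]
    by_cases hn : 1 ≤ n
    · rw [if_pos hn]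
      have hgl : (((diagBlock A (Fin.last n)).det *
            (leadBlock A (Fin.last n).val (Fin.last n).isLt.le).det /
            (leadBlock A ((Fin.last n).val + 1) (Fin.last n).isLt).det) ^ q +
          ((diagBlock B (Fin.last n)).det *
            (leadBlock B (Fin.last n).val (Fin.last n).isLt.le).det /
            (leadBlock B ((Fin.last n).val + 1) (Fin.last n).isLt).det) ^ p - 1) =
          ((α.det * A'.det / A.det) ^ q + (β.det * B'.det / B.det) ^ p - 1) := by
        rw [show leadBlock A ((Fin.last n).val + 1) (Fin.last n).isLt = A from
            leadBlock_self A _,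
          show leadBlock B ((Fin.last n).val + 1) (Fin.last n).isLt = B from
            leadBlock_self B _]
        rfl
      rw [hgl]
      have hΦA : α.det * A'.det / A.det = α.det / SA.det := by
        rw [hdetA, mul_comm α.det A'.det, mul_div_mul_left _ _ hA'.det_pos.ne']
      have hΦB : β.det * B'.det / B.det = β.det / SB.det := by
        rw [hdetB, mul_comm β.det B'.det, mul_div_mul_left _ _ hB'.det_pos.ne']
      rw [hΦA, hΦB, hdetA, hdetB]
      have key : SA.det ^ q * SB.det ^ p * ((α.det / SA.det) ^ q + (β.det / SB.det) ^ p - 1)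
          = α.det ^ q * SB.det ^ p + SA.det ^ q * β.det ^ p - SA.det ^ q * SB.det ^ p := by
        have h1 : SA.det ^ q ≠ 0 := pow_ne_zero _ hSA.det_pos.ne'
        have h2 : SB.det ^ p ≠ 0 := pow_ne_zero _ hSB.det_pos.ne'
        rw [div_pow, div_pow]
        field_simp
      calc (A'.det * SA.det) ^ q * ((B'.det * SB.det) ^ p) *
            ((∏ ν ∈ Finset.univ.filter (fun ν : Fin n => 1 ≤ ν.val),
              (((diagBlock A' ν).det * (leadBlock A' ν.val ν.isLt.le).det /
                    (leadBlock A' (ν.val + 1) ν.isLt).det) ^ q +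
                 ((diagBlock B' ν).det * (leadBlock B' ν.val ν.isLt.le).det /
                    (leadBlock B' (ν.val + 1) ν.isLt).det) ^ p - 1)) *
              ((α.det / SA.det) ^ q + (β.det / SB.det) ^ p - 1))
          = (A'.det ^ q * B'.det ^ p *
              ∏ ν ∈ Finset.univ.filter (fun ν : Fin n => 1 ≤ ν.val),
                (((diagBlock A' ν).det * (leadBlock A' ν.val ν.isLt.le).det /
                      (leadBlock A' (ν.val + 1) ν.isLt).det) ^ q +
                   ((diagBlock B' ν).det * (leadBlock B' ν.val ν.isLt.le).det /
                      (leadBlock B' (ν.val + 1) ν.isLt).det) ^ p - 1)) *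
            (SA.det ^ q * SB.det ^ p * ((α.det / SA.det) ^ q + (β.det / SB.det) ^ p - 1)) := by
            rw [mul_pow, mul_pow]; ring
        _ = _ := by rw [key]
    · rw [if_neg hn]
      have hn0 : n = 0 := by omega
      subst hn0
      have hAempty : aᴴ * A'⁻¹ * a = 0 := by
        ext x y
        rw [Matrix.mul_apply]
        simp
      have hBempty : bᴴ * B'⁻¹ * b = 0 := by
        ext x y
        rw [Matrix.mul_apply]
        simp
      have hSAα : SA = α := by rw [hSA_def, hAempty, sub_zero]
      have hSBβ : SB = β := by rw [hSB_def, hBempty, sub_zero]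
      have hA'1 : A'.det = 1 := Matrix.det_isEmpty
      have hB'1 : B'.det = 1 := Matrix.det_isEmpty
      rw [hdetA, hdetB, hSAα, hSBβ, hA'1, hB'1]
      ring

end OppenheimHelpers

/-- **Theorem 2.1.** Oppenheim type inequality for the Khatri-Rao product of two
block positive definite matrices.  (Here `μ : Fin n` with `1 ≤ μ.val` corresponds to the
`1`-indexed range `μ = 2,…,n` of the paper, so `A_{μμ}` is `diagBlock A μ`, `A_{μ-1}` is the
leading principal block submatrix of block size `μ.val`, and `A_μ` the one of block size
`μ.val + 1`.) -/
theorem khatriRao_det_ge {n p q : ℕ}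
    (A : Matrix (Fin n × Fin p) (Fin n × Fin p) ℂ)
    (B : Matrix (Fin n × Fin q) (Fin n × Fin q) ℂ)
    (hA : A.PosDef) (hB : B.PosDef) :
    (khatriRao A B).det ≥
      A.det ^ q * B.det ^ p *
        ∏ μ ∈ Finset.univ.filter (fun μ : Fin n => 1 ≤ μ.val),
          (((diagBlock A μ).det * (leadBlock A μ.val μ.isLt.le).det /
                (leadBlock A (μ.val + 1) μ.isLt).det) ^ q +
             ((diagBlock B μ).det * (leadBlock B μ.val μ.isLt.le).det /
                (leadBlock B (μ.val + 1) μ.isLt).det) ^ p - 1) := by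
  exact aux n p q A B hA hB
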